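/- The ideal ⁱℂ[X₁,…,Xₙ] of infinitesimal internal polynomials is idempotent: every infinitesimal internal polynomial P can be written as P = ε·Q with ε an infinitesimal element of *ℂ and Q an infinitesimal internal polynomial; in particular (ⁱℂ[X])² = ⁱℂ[X]. -/

import Mathlib

open Filter

/-- A sequence representing a point of `*ℂ` is *bounded* if its absolute value is
`𝒰`-a.e. at most some standard natural number. -/
def BddSeq (𝒰 : Ultrafilter ℕ) (x : ℕ → ℂ) : Prop :=
  ∃ m : ℕ, ∀ᶠ i in (𝒰 : Filter ℕ), ‖x i‖ ≤ (m : ℝ)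

/-- A sequence representing a point of `*ℂ` is *infinitesimal* if its absolute value
is `𝒰`-a.e. at most `ε` for every standard `ε > 0`. -/
def InfmlSeq (𝒰 : Ultrafilter ℕ) (x : ℕ → ℂ) : Prop :=
  ∀ ε : ℝ, 0 < ε → ∀ᶠ i in (𝒰 : Filter ℕ), ‖x i‖ ≤ ε

/-- An internal polynomial `[p i]` is *infinitesimal* if it maps every bounded point
of `*ℂⁿ` to an infinitesimal point of `*ℂ`. -/
def InfmlPoly (𝒰 : Ultrafilter ℕ) (n : ℕ) (p : ℕ → MvPolynomial (Fin n) ℂ) : Prop :=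
  ∀ z : Fin n → ℕ → ℂ, (∀ k, BddSeq 𝒰 (z k)) →
    InfmlSeq 𝒰 fun i => MvPolynomial.eval (fun k => z k i) (p i)

private lemma exists_poly_argmax (n : ℕ) (P : MvPolynomial (Fin n) ℂ) (m : ℕ) :
    ∃ w : Fin n → ℂ, (∀ k, ‖w k‖ ≤ (m : ℝ)) ∧
      ∀ z : Fin n → ℂ, (∀ k, ‖z k‖ ≤ (m : ℝ)) →
        ‖MvPolynomial.eval z P‖ ≤ ‖MvPolynomial.eval w P‖ := by
  have hD : IsCompact {z : Fin n → ℂ | ∀ k, ‖z k‖ ≤ (m : ℝ)} := by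
    have : {z : Fin n → ℂ | ∀ k, ‖z k‖ ≤ (m : ℝ)} =
        Set.pi Set.univ (fun _ => Metric.closedBall (0:ℂ) m) := by
      ext z; simp [Set.mem_pi, Complex.dist_eq]
    rw [this]
    exact isCompact_univ_pi fun _ => isCompact_closedBall 0 m
  have hne : ({z : Fin n → ℂ | ∀ k, ‖z k‖ ≤ (m : ℝ)}).Nonempty :=
    ⟨0, fun k => by simp⟩
  have hc : Continuous fun z : Fin n → ℂ => ‖MvPolynomial.eval z P‖ :=
    continuous_norm.comp (MvPolynomial.continuous_eval P)
  obtain ⟨w, hwD, hwmax⟩ := hD.exists_isMaxOn hne hc.continuousOn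
  exact ⟨w, hwD, fun z hz => hwmax hz⟩

/-- **The ideal of infinitesimal internal polynomials is idempotent (Lemma 6.4).**
Every infinitesimal internal polynomial `P = [p i]` can be written as `P = ε • Q`
where `ε = [e i]` is an infinitesimal element of `*ℂ` and `Q = [q i]` is an
infinitesimal internal polynomial; in particular `(ⁱℂ[X₁,…,Xₙ])² = ⁱℂ[X₁,…,Xₙ]`. -/
theorem infinitesimal_internal_polynomial_ideal_idempotent
    (𝒰 : Ultrafilter ℕ) (h𝒰 : ∀ a : ℕ, 𝒰 ≠ pure a) (n : ℕ)
    (p : ℕ → MvPolynomial (Fin n) ℂ) (hp : InfmlPoly 𝒰 n p) :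
    ∃ (e : ℕ → ℂ) (q : ℕ → MvPolynomial (Fin n) ℂ),
      InfmlSeq 𝒰 e ∧ InfmlPoly 𝒰 n q ∧
      ∀ᶠ i in (𝒰 : Filter ℕ), p i = MvPolynomial.C (e i) * q i := by
  classical
  have hex : ∀ i m : ℕ, ∃ w : Fin n → ℂ, (∀ k, ‖w k‖ ≤ (m : ℝ)) ∧
      ∀ z : Fin n → ℂ, (∀ k, ‖z k‖ ≤ (m : ℝ)) →
        ‖MvPolynomial.eval z (p i)‖ ≤ ‖MvPolynomial.eval w (p i)‖ :=
    fun i m => exists_poly_argmax n (p i) m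
  choose w hw1 hw2 using hex
  set T : ℕ → ℕ → ℝ := fun i m => ‖MvPolynomial.eval (w i m) (p i)‖ with hT
  have hT0 : ∀ i m, 0 ≤ T i m := fun i m => norm_nonneg _
  have hTmono : ∀ i (m m' : ℕ), m ≤ m' → T i m ≤ T i m' := by
    intro i m m' hmm'
    exact hw2 i m' (w i m) (fun k => le_trans (hw1 i m k) (by exact_mod_cast hmm'))
  have hcof : (𝒰 : Filter ℕ) ≤ cofinite := by
    rcases 𝒰.le_cofinite_or_eq_pure with h | ⟨a, ha⟩
    · exact h
    · exact absurd ha (h𝒰 a)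
  have hatTop : (𝒰 : Filter ℕ) ≤ atTop := by rw [← Nat.cofinite_eq_atTop]; exact hcof
  have key : ∀ m : ℕ, 0 < m → ∀ᶠ i in (𝒰 : Filter ℕ), T i m ≤ 1 / (m : ℝ) := by
    intro m hm
    have hb : ∀ k, BddSeq 𝒰 (fun i => w i m k) :=
      fun k => ⟨m, Eventually.of_forall fun i => hw1 i m k⟩
    have h := hp (fun k i => w i m k) hb (1 / (m : ℝ)) (by positivity)
    filter_upwards [h] with i hi
    exact hi
  set f : ℕ → ℕ :=
    fun i => ((Finset.range (i+1)).filter (fun m => 1 ≤ m ∧ T i m ≤ 1 / (m : ℝ))).sup id with hf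
  have hf_ge : ∀ m : ℕ, 0 < m → ∀ᶠ i in (𝒰 : Filter ℕ), m ≤ f i := by
    intro m hm
    filter_upwards [key m hm, hatTop (eventually_ge_atTop m)] with i h1 h2
    exact Finset.le_sup (f := id)
      (Finset.mem_filter.mpr ⟨Finset.mem_range.mpr (by omega), hm, h1⟩)
  have hfT : ∀ i, 0 < f i → T i (f i) ≤ 1 / (f i : ℝ) := by
    intro i hfi
    have hne : (((Finset.range (i+1)).filter
        (fun m => 1 ≤ m ∧ T i m ≤ 1 / (m : ℝ)))).Nonempty := by
      by_contra h
      rw [Finset.not_nonempty_iff_eq_empty] at h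
      simp only [hf] at hfi
      rw [h] at hfi
      simp at hfi
    obtain ⟨b, hb, hsup⟩ := Finset.exists_mem_eq_sup _ hne id
    have hfb : f i = b := hsup
    rw [hfb]
    exact (Finset.mem_filter.mp hb).2.2
  set s : ℕ → ℝ := fun i => Real.sqrt (T i (f i) + ((f i : ℝ) + 1)⁻¹) with hs
  have hspos : ∀ i, 0 < s i := by
    intro i
    apply Real.sqrt_pos.mpr
    have : (0:ℝ) < ((f i : ℝ) + 1)⁻¹ := by positivity
    linarith [hT0 i (f i)]
  set e : ℕ → ℂ := fun i => ((s i : ℝ) : ℂ) with he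
  have habse : ∀ i, ‖e i‖ = s i := by
    intro i
    simp only [he, Complex.norm_real, Real.norm_eq_abs]
    exact abs_of_pos (hspos i)
  have hene : ∀ i, e i ≠ 0 := by
    intro i
    simp only [he, ne_eq, Complex.ofReal_eq_zero]
    exact ne_of_gt (hspos i)
  have hsq : ∀ i, s i ^ 2 = T i (f i) + ((f i : ℝ) + 1)⁻¹ := by
    intro i
    apply Real.sq_sqrt
    have : (0:ℝ) < ((f i : ℝ) + 1)⁻¹ := by positivity
    linarith [hT0 i (f i)]
  -- s is eventually small
  have hssmall : ∀ ε : ℝ, 0 < ε → ∀ᶠ i in (𝒰 : Filter ℕ), s i ≤ ε := by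
    intro ε hε
    obtain ⟨m, hm⟩ := exists_nat_ge (2 / ε ^ 2)
    filter_upwards [hf_ge (m + 1) (Nat.succ_pos m)] with i hfi
    have hfipos : 0 < f i := lt_of_lt_of_le (Nat.succ_pos m) hfi
    have hfiR : (0:ℝ) < (f i : ℝ) := by exact_mod_cast hfipos
    have h1 : T i (f i) ≤ 1 / (f i : ℝ) := hfT i hfipos
    have h2 : ((f i : ℝ) + 1)⁻¹ ≤ 1 / (f i : ℝ) := by
      rw [one_div]
      apply inv_anti₀ hfiR
      linarith
    have h3 : (2 : ℝ) / ε ^ 2 ≤ (f i : ℝ) := by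
      refine hm.trans ?_
      exact_mod_cast Nat.le_of_succ_le hfi
    have h4 : T i (f i) + ((f i : ℝ) + 1)⁻¹ ≤ ε ^ 2 := by
      have h5 : 2 / (f i : ℝ) ≤ ε ^ 2 := by
        rw [div_le_iff₀ hfiR]
        rw [div_le_iff₀ (by positivity : (0:ℝ) < ε ^ 2)] at h3
        linarith
      have h6 : (1:ℝ) / (f i : ℝ) + 1 / (f i : ℝ) = 2 / (f i : ℝ) := by ring
      linarith
    calc s i ≤ Real.sqrt (ε ^ 2) := Real.sqrt_le_sqrt h4
      _ = ε := Real.sqrt_sq hε.le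
  have heinf : InfmlSeq 𝒰 e := by
    intro ε hε
    filter_upwards [hssmall ε hε] with i hi
    rw [habse]; exact hi
  set q : ℕ → MvPolynomial (Fin n) ℂ := fun i => MvPolynomial.C (e i)⁻¹ * p i with hq
  refine ⟨e, q, heinf, ?_, Eventually.of_forall fun i => ?_⟩
  · -- q is an infinitesimal polynomial
    intro z hz ε hε
    choose mk hmk using hz
    set m0 : ℕ := Finset.univ.sup mk with hm0
    have hzb : ∀ᶠ i in (𝒰 : Filter ℕ), ∀ k, ‖z k i‖ ≤ (mk k : ℝ) :=
      eventually_all.mpr hmk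
    filter_upwards [hssmall ε hε, hf_ge (m0 + 1) (Nat.succ_pos m0), hzb] with i hsi hfi hzi
    have hzb2 : ∀ k, ‖z k i‖ ≤ ((f i : ℕ) : ℝ) := by
      intro k
      refine (hzi k).trans ?_
      have h1 : mk k ≤ m0 := Finset.le_sup (Finset.mem_univ k)
      have : mk k ≤ f i := by omega
      exact_mod_cast this
    have hpb : ‖MvPolynomial.eval (fun k => z k i) (p i)‖ ≤ T i (f i) :=
      hw2 i (f i) _ hzb2
    have heval : MvPolynomial.eval (fun k => z k i) (q i) =
        (e i)⁻¹ * MvPolynomial.eval (fun k => z k i) (p i) := by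
      simp [hq]
    rw [heval, norm_mul, norm_inv, habse]
    have hsipos := hspos i
    have hTle : T i (f i) ≤ s i ^ 2 := by
      rw [hsq]
      have : (0:ℝ) < ((f i : ℝ) + 1)⁻¹ := by positivity
      linarith
    calc (s i)⁻¹ * ‖MvPolynomial.eval (fun k => z k i) (p i)‖
        ≤ (s i)⁻¹ * (s i ^ 2) := by
          apply mul_le_mul_of_nonneg_left (hpb.trans hTle) (by positivity)
      _ = s i := by field_simp
      _ ≤ ε := hsi
  · -- p i = C (e i) * q i
    rw [hq]
    rw [← mul_assoc, ← MvPolynomial.C_mul, mul_inv_cancel₀ (hene i), MvPolynomial.C_1, one_mul]
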